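/- Let σ be a nondecreasing sigmoidal function satisfying (Σ1), (Σ2), (Σ3), and let φ_σ be its density function. Then for every a, b ∈ ℝ with a < b, every x ∈ [a,b], and every n ∈ ℕ⁺ with ⌈na⌉ ≤ ⌊nb⌋, one has 1 ≥ ∑_{k=⌈na⌉}^{⌊nb⌋} φ_σ(nx − k) ≥ φ_σ(1) > 0. -/

import Mathlib

open Filter Topology MeasureTheory

/-- The density (kernel) function generated by a sigmoidal function. -/
noncomputable def phiFn (σ : ℝ → ℝ) (x : ℝ) : ℝ := (σ (x + 1) - σ (x - 1)) / 2

/-- σ is a (measurable) sigmoidal function. -/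
def Sigmoidal (σ : ℝ → ℝ) : Prop :=
  Measurable σ ∧ Tendsto σ atBot (𝓝 0) ∧ Tendsto σ atTop (𝓝 1)

/-- (Σ1): σ(x) - 1/2 is an odd function. -/
def Sigma1 (σ : ℝ → ℝ) : Prop := ∀ x : ℝ, σ (-x) - 1/2 = -(σ x - 1/2)

/-- (Σ2): σ ∈ C²(ℝ) and σ is concave on [0, +∞). -/
def Sigma2 (σ : ℝ → ℝ) : Prop := ContDiff ℝ 2 σ ∧ ConcaveOn ℝ (Set.Ici 0) σ

/-- (Σ3): σ(x) = O(|x|^{-α-1}) as x → -∞, with α > 0. -/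
def Sigma3 (σ : ℝ → ℝ) (α : ℝ) : Prop :=
  0 < α ∧ σ =O[atBot] fun x : ℝ => |x| ^ (-α - 1)

/-- (Σ4): σ ∈ C^m(ℝ), m ≥ 2, and for each s = 1,…,m there are constants
`K s, C s > 0` with |σ^{(s)}(x)| ≤ C s * |x|^{-β-1} for |x| ≥ K s, where β > m + 1. -/
def Sigma4 (σ : ℝ → ℝ) (m : ℕ) (β : ℝ) (K C : ℕ → ℝ) : Prop :=
  2 ≤ m ∧ (m : ℝ) + 1 < β ∧ ContDiff ℝ m σ ∧
    ∀ s : ℕ, 1 ≤ s → s ≤ m → 0 < K s ∧ 0 < C s ∧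
      ∀ x : ℝ, K s ≤ |x| → |iteratedDeriv s σ x| ≤ C s * |x| ^ (-β - 1)

/-- Algebraic moment of order ν of Φ. -/
noncomputable def algMoment (Φ : ℝ → ℝ) (ν : ℕ) (x : ℝ) : ℝ :=
  ∑' k : ℤ, Φ (x - (k : ℝ)) * ((k : ℝ) - x) ^ ν

/-- (Σ5): the algebraic moments of order j = 1,…,m of φ_σ are constants A j. -/
def Sigma5 (σ : ℝ → ℝ) (m : ℕ) (A : ℕ → ℝ) : Prop :=
  ∀ j : ℕ, 1 ≤ j → j ≤ m → ∀ x : ℝ, algMoment (phiFn σ) j x = A j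

/-- Truncated algebraic moment of order ν of Φ (associated with integers a < b). -/
noncomputable def truncMoment (Φ : ℝ → ℝ) (ν : ℕ) (a b : ℤ) (n : ℕ) (u : ℝ) : ℝ :=
  ∑ k ∈ Finset.Icc ((n : ℤ) * a) ((n : ℤ) * b), Φ (u - (k : ℝ)) * ((k : ℝ) - u) ^ ν

/-- The ν-th discrete absolute moment function of Φ (before taking sup over u). -/
noncomputable def discMoment (Φ : ℝ → ℝ) (ν : ℝ) (u : ℝ) : ℝ :=
  ∑' k : ℤ, |Φ (u - (k : ℝ))| * |u - (k : ℝ)| ^ ν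

/-- The Riemann zeta function (as a real series), ζ(p) = ∑_{i≥1} i^{-p}. -/
noncomputable def zetaR (p : ℝ) : ℝ := ∑' i : ℕ, ((i : ℝ) + 1) ^ (-p)

/-- The NN operator F_n activated by σ. -/
noncomputable def Fop (σ : ℝ → ℝ) (f : ℝ → ℝ) (a b : ℝ) (n : ℕ) (x : ℝ) : ℝ :=
  (∑ k ∈ Finset.Icc ⌈(n : ℝ) * a⌉ ⌊(n : ℝ) * b⌋, f ((k : ℝ) / n) * phiFn σ ((n : ℝ) * x - k)) /
    (∑ k ∈ Finset.Icc ⌈(n : ℝ) * a⌉ ⌊(n : ℝ) * b⌋, phiFn σ ((n : ℝ) * x - k))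

/-- The modified NN operator F̃_n (integer endpoints a < b). -/
noncomputable def Ftil (σ : ℝ → ℝ) (f : ℝ → ℝ) (a b : ℤ) (n : ℕ) (x : ℝ) : ℝ :=
  ∑ k ∈ Finset.Icc ((n : ℤ) * a) ((n : ℤ) * b), f ((k : ℝ) / n) * phiFn σ ((n : ℝ) * x - (k : ℝ))

/-- Sup-norm of g on [a,b]. -/
noncomputable def supNormOn (g : ℝ → ℝ) (a b : ℝ) : ℝ := ⨆ x : Set.Icc a b, |g x|

/-- Modulus of continuity of g on [a,b]. -/
noncomputable def modulus (g : ℝ → ℝ) (a b h : ℝ) : ℝ :=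
  sSup {y : ℝ | ∃ u ∈ Set.Icc a b, ∃ v ∈ Set.Icc a b, |u - v| ≤ h ∧ y = |g u - g v|}

/-- Discrete absolute moment (natural order ν) of Φ: sup over u of the moment series. -/
noncomputable def dmomentN (Φ : ℝ → ℝ) (ν : ℕ) : ℝ :=
  ⨆ u : ℝ, ∑' k : ℤ, |Φ (u - (k : ℝ))| * |u - (k : ℝ)| ^ ν



lemma tele_sum (f : ℤ → ℝ) (m : ℤ) : ∀ M : ℤ, m ≤ M →
    ∑ k ∈ Finset.Icc m M, (f k - f (k+2)) = f m + f (m+1) - f (M+1) - f (M+2) := by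
  refine Int.le_induction ?_ ?_
  · simp [Finset.Icc_self]
  · intro M hM ih
    have hins : Finset.Icc m (M+1) = insert (M+1) (Finset.Icc m M) := by
      ext k; simp only [Finset.mem_Icc, Finset.mem_insert]; omega
    rw [hins, Finset.sum_insert (by simp only [Finset.mem_Icc]; omega), ih]
    simp only [show M+1+1 = M+2 from by ring, show M+1+2 = M+3 from by ring]
    ring

theorem finite_sum_bounds (σ : ℝ → ℝ) (α : ℝ) (hσ : Sigmoidal σ) (hmono : Monotone σ)
    (h1 : Sigma1 σ) (h2 : Sigma2 σ) (h3 : Sigma3 σ α)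
    (a b : ℝ) (hab : a < b) (x : ℝ) (hx : x ∈ Set.Icc a b)
    (n : ℕ) (hn : 1 ≤ n) (hceil : ⌈(n : ℝ) * a⌉ ≤ ⌊(n : ℝ) * b⌋) :
    (∑ k ∈ Finset.Icc ⌈(n : ℝ) * a⌉ ⌊(n : ℝ) * b⌋, phiFn σ ((n : ℝ) * x - (k : ℝ))) ≤ 1 ∧
    phiFn σ 1 ≤ (∑ k ∈ Finset.Icc ⌈(n : ℝ) * a⌉ ⌊(n : ℝ) * b⌋, phiFn σ ((n : ℝ) * x - (k : ℝ))) ∧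
    0 < phiFn σ 1 := by
  obtain ⟨hmeas, hbot, htop⟩ := hσ
  have hσ0 : ∀ y : ℝ, 0 ≤ σ y := fun y =>
    le_of_tendsto hbot ((eventually_le_atBot y).mono fun z hz => hmono hz)
  have hσ1 : ∀ y : ℝ, σ y ≤ 1 := fun y =>
    ge_of_tendsto htop ((eventually_ge_atTop y).mono fun z hz => hmono hz)
  have hσzero : σ 0 = 1/2 := by have := h1 0; simp at this; linarith
  have hsymm : ∀ y : ℝ, σ (-y) = 1 - σ y := fun y => by have := h1 y; linarith
  -- concavity inequality
  have hconc : ∀ s : ℝ, 0 ≤ s → s ≤ 1 → σ 2 + σ 0 ≤ σ (1+s) + σ (1-s) := by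
    intro s hs0 hs1
    have hC := h2.2.2
    have h0 : (0:ℝ) ∈ Set.Ici (0:ℝ) := Set.mem_Ici.mpr (le_refl 0)
    have h2m : (2:ℝ) ∈ Set.Ici (0:ℝ) := by norm_num
    have hA := hC h0 h2m (a := (1+s)/2) (b := (1-s)/2) (by linarith) (by linarith) (by ring)
    have hB := hC h0 h2m (a := (1-s)/2) (b := (1+s)/2) (by linarith) (by linarith) (by ring)
    simp only [smul_eq_mul] at hA hB
    have e1 : (1+s)/2 * 0 + (1-s)/2 * 2 = 1 - s := by ring
    have e2 : (1-s)/2 * 0 + (1+s)/2 * 2 = 1 + s := by ring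
    rw [e1] at hA; rw [e2] at hB
    nlinarith [hA, hB]
  have hσ2 : 1/2 < σ 2 := by
    by_contra hle
    push_neg at hle
    have heq : σ 2 = 1/2 := le_antisymm hle (by
      have := hmono (show (0:ℝ) ≤ 2 by norm_num); linarith)
    have hub : ∀ z : ℝ, 2 ≤ z → σ z ≤ 1/2 := by
      intro z hz
      have hzpos : (0:ℝ) < z := by linarith
      have hC := h2.2.2
      have hA := hC (Set.mem_Ici.mpr (le_refl (0:ℝ))) (Set.mem_Ici.mpr (le_of_lt hzpos : (0:ℝ) ≤ z))
        (a := 1 - 2/z) (b := 2/z)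
        (by rw [sub_nonneg]; rw [div_le_one hzpos]; linarith)
        (by positivity) (by ring)
      simp only [smul_eq_mul] at hA
      have e : (1 - 2/z) * 0 + 2/z * z = 2 := by field_simp; ring
      rw [e, heq, hσzero] at hA
      have hzne : z ≠ 0 := ne_of_gt hzpos
      have h2z : 0 < 2/z := by positivity
      nlinarith [hA]
    have : (1:ℝ) ≤ 1/2 :=
      le_of_tendsto htop ((eventually_ge_atTop (2:ℝ)).mono fun z hz => hub z hz)
    linarith
  have hphi1 : 0 < phiFn σ 1 := by
    unfold phiFn
    have : σ (1-1) = 1/2 := by norm_num [hσzero]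
    have h11 : (1:ℝ) + 1 = 2 := by norm_num
    rw [h11, this]; linarith
  -- phi is nonneg
  have hphinn : ∀ t : ℝ, 0 ≤ phiFn σ t := by
    intro t; unfold phiFn
    have := hmono (show t - 1 ≤ t + 1 by linarith)
    linarith
  -- phi t ≥ phi 1 for |t| ≤ 1
  have hphige : ∀ t : ℝ, |t| ≤ 1 → phiFn σ 1 ≤ phiFn σ t := by
    have key : ∀ s : ℝ, 0 ≤ s → s ≤ 1 → phiFn σ 1 ≤ phiFn σ s := by
      intro s hs0 hs1
      unfold phiFn
      have hcs := hconc s hs0 hs1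
      have hodd : σ (s - 1) = 1 - σ (1 - s) := by
        have := hsymm (1 - s); rw [show -(1-s) = s - 1 by ring] at this; linarith
      have g1 : σ (1+1) = σ 2 := by norm_num
      have g2 : σ (1-1) = 1/2 := by norm_num [hσzero]
      rw [g1, g2, hodd]
      rw [hσzero] at hcs
      have hc' : σ (1+s) = σ (s+1) := by rw [add_comm]
      rw [hc'] at hcs
      linarith
    intro t ht
    rcases le_or_gt 0 t with h | h
    · exact key t h (by rw [abs_of_nonneg h] at ht; exact ht)
    · have heven : phiFn σ t = phiFn σ (-t) := by
        unfold phiFn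
        have e1 : σ (-t + 1) = 1 - σ (t - 1) := by
          have := hsymm (t - 1); rw [show -(t-1) = -t + 1 by ring] at this; linarith
        have e2 : σ (-t - 1) = 1 - σ (t + 1) := by
          have := hsymm (t + 1); rw [show -(t+1) = -t - 1 by ring] at this; linarith
        rw [e1, e2]; ring
      rw [heven]
      exact key (-t) (by linarith) (by rw [abs_of_neg h] at ht; linarith)
  set y : ℝ := (n:ℝ) * x with hy
  set m : ℤ := ⌈(n:ℝ) * a⌉ with hm
  set M : ℤ := ⌊(n:ℝ) * b⌋ with hM
  have hnpos : (0:ℝ) < n := by exact_mod_cast hn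
  have hya : (n:ℝ) * a ≤ y := by
    apply mul_le_mul_of_nonneg_left hx.1 (le_of_lt hnpos)
  have hyb : y ≤ (n:ℝ) * b := by
    apply mul_le_mul_of_nonneg_left hx.2 (le_of_lt hnpos)
  -- the sum equals the telescoping value
  have hsum : ∑ k ∈ Finset.Icc m M, phiFn σ (y - (k:ℝ)) =
      (σ (y + 1 - m) + σ (y + 1 - (m+1)) - σ (y + 1 - (M+1)) - σ (y + 1 - (M+2))) / 2 := by
    have := tele_sum (fun k => σ (y + 1 - (k:ℝ))) m M hceil
    have e : ∀ k : ℤ, phiFn σ (y - (k:ℝ)) =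
        ((fun k : ℤ => σ (y + 1 - (k:ℝ))) k - (fun k : ℤ => σ (y + 1 - (k:ℝ))) (k+2)) / 2 := by
      intro k
      unfold phiFn
      simp only []
      push_cast
      ring_nf
    calc ∑ k ∈ Finset.Icc m M, phiFn σ (y - (k:ℝ))
        = ∑ k ∈ Finset.Icc m M, ((fun k : ℤ => σ (y + 1 - (k:ℝ))) k
            - (fun k : ℤ => σ (y + 1 - (k:ℝ))) (k+2)) / 2 := Finset.sum_congr rfl (fun k _ => e k)
      _ = (∑ k ∈ Finset.Icc m M, ((fun k : ℤ => σ (y + 1 - (k:ℝ))) k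
            - (fun k : ℤ => σ (y + 1 - (k:ℝ))) (k+2))) / 2 := by rw [Finset.sum_div]
      _ = _ := by rw [this]; push_cast; ring_nf
  refine ⟨?_, ?_, hphi1⟩
  · rw [hsum]
    have b1 := hσ1 (y + 1 - (m:ℝ))
    have b2 := hσ1 (y + 1 - ((m:ℝ)+1))
    have b3 := hσ0 (y + 1 - ((M:ℝ)+1))
    have b4 := hσ0 (y + 1 - ((M:ℝ)+2))
    push_cast
    linarith
  · -- find k₀ in Icc m M with |y - k₀| ≤ 1
    obtain ⟨k₀, hk₀mem, hk₀close⟩ :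
        ∃ k₀ : ℤ, k₀ ∈ Finset.Icc m M ∧ |y - (k₀:ℝ)| ≤ 1 := by
      rcases lt_or_ge y (m:ℝ) with hlt | hge
      · refine ⟨m, Finset.mem_Icc.mpr ⟨le_refl m, hceil⟩, ?_⟩
        have hmlt : (m:ℝ) < (n:ℝ) * a + 1 := Int.ceil_lt_add_one _
        rw [abs_le]; constructor <;> linarith
      · rcases le_or_gt y (M:ℝ) with hle | hgt
        · refine ⟨⌊y⌋, Finset.mem_Icc.mpr ⟨Int.le_floor.mpr hge, ?_⟩, ?_⟩
          · exact_mod_cast Int.floor_le_floor hle |>.trans_eq (Int.floor_intCast M)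
          · have h1' := Int.floor_le y
            have h2' := Int.lt_floor_add_one y
            rw [abs_le]; constructor <;> linarith
        · refine ⟨M, Finset.mem_Icc.mpr ⟨hceil, le_refl M⟩, ?_⟩
          have hMgt : (n:ℝ) * b - 1 < (M:ℝ) := Int.sub_one_lt_floor _
          rw [abs_le]; constructor <;> linarith
    calc phiFn σ 1 ≤ phiFn σ (y - (k₀:ℝ)) := hphige _ hk₀close
      _ ≤ ∑ k ∈ Finset.Icc m M, phiFn σ (y - (k:ℝ)) :=
          Finset.single_le_sum (f := fun k : ℤ => phiFn σ (y - (k:ℝ))) (fun k _ => hphinn _) hk₀mem
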